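/- Let P be a 2×2 matrix of Laurent polynomials over ℂ with det(P) not identically zero and gcd of the four entries equal to 1 (no nontrivial common factor). Suppose V and V̊ are 2×2 Laurent polynomial matrices with V(z)V*(z) = P(z) = V̊(z)V̊*(z) for all z ∈ ℂ∖{0}, and det(V̊(z)) = λ z^k det(V(z)) for some λ ∈ ℂ∖{0}, k ∈ ℤ. Then there exists a 2×2 paraunitary matrix U of Laurent polynomials (U(z)U*(z) = I₂ on ℂ∖{0}) with det(U(z)) = λ z^k and V̊(z) = V(z)U(z). -/

import Mathlib

noncomputable section
open LaurentPolynomial Matrix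

/-- The adjoint (star) of a Laurent polynomial: (Σ u(k)zᵏ)⋆ = Σ conj(u(k)) z⁻ᵏ. -/
def lstar (p : LaurentPolynomial ℂ) : LaurentPolynomial ℂ :=
  p.coeff.sum fun k c => LaurentPolynomial.C (starRingEnd ℂ c) * LaurentPolynomial.T (-k)

/-- Evaluation of a Laurent polynomial at a nonzero complex number. -/
def leval (z : ℂ) (p : LaurentPolynomial ℂ) : ℂ :=
  p.coeff.sum fun k c => c * z ^ k

/-- Substitution z ↦ -z in a Laurent polynomial. -/
def nsub (p : LaurentPolynomial ℂ) : LaurentPolynomial ℂ :=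
  p.coeff.sum fun k c => LaurentPolynomial.C (c * (-1 : ℂ) ^ k) * LaurentPolynomial.T k

/-- Substitution z ↦ z² in a Laurent polynomial. -/
def ssub (p : LaurentPolynomial ℂ) : LaurentPolynomial ℂ :=
  p.coeff.sum fun k c => LaurentPolynomial.C c * LaurentPolynomial.T (2 * k)

/-- Entrywise evaluation of a matrix of Laurent polynomials. -/
def meval {m n : ℕ} (z : ℂ) (M : Matrix (Fin m) (Fin n) (LaurentPolynomial ℂ)) :
    Matrix (Fin m) (Fin n) ℂ :=
  M.map (leval z)

/-- Star-adjoint transpose of a matrix of Laurent polynomials. -/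
def mstar {m n : ℕ} (M : Matrix (Fin m) (Fin n) (LaurentPolynomial ℂ)) :
    Matrix (Fin n) (Fin m) (LaurentPolynomial ℂ) :=
  (M.map lstar)ᵀ

/-- The γ-coset of a Laurent polynomial: coefficient of zᵏ is the coefficient of z^{γ+2k}. -/
def coset (γ : ℤ) (p : LaurentPolynomial ℂ) : LaurentPolynomial ℂ :=
  p.coeff.sum fun k c => if (k - γ) % 2 = 0 then LaurentPolynomial.C c * LaurentPolynomial.T ((k - γ) / 2) else 0


open Polynomial in
instance : IsDomain (LaurentPolynomial ℂ) := NoZeroDivisors.to_isDomain _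

section EvalHom

/-- Evaluation at a nonzero complex number, as a ring hom. -/
def levalHom (u : ℂˣ) : LaurentPolynomial ℂ →+* ℂ :=
  ((AddMonoidAlgebra.lift ℂ ℂ ℤ) ((Units.coeHom ℂ).comp (zpowersHom ℂˣ u))).toRingHom

lemma levalHom_apply (u : ℂˣ) (p : LaurentPolynomial ℂ) :
    levalHom u p = p.coeff.sum fun k c => c * (u : ℂ) ^ k := by
  show (AddMonoidAlgebra.lift ℂ ℂ ℤ) ((Units.coeHom ℂ).comp (zpowersHom ℂˣ u)) p = _
  rw [AddMonoidAlgebra.lift_apply]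
  simp [Finsupp.sum, zpowersHom_apply, smul_eq_mul]

lemma leval_eq (u : ℂˣ) (p : LaurentPolynomial ℂ) : leval (u : ℂ) p = levalHom u p :=
  (levalHom_apply u p).symm

lemma levalHom_toLaurent (u : ℂˣ) (q : Polynomial ℂ) :
    levalHom u (Polynomial.toLaurent q) = q.eval (u : ℂ) := by
  have : (levalHom u).comp Polynomial.toLaurent = Polynomial.evalRingHom (u : ℂ) := by
    apply Polynomial.ringHom_ext
    · intro a
      rw [RingHom.comp_apply, Polynomial.toLaurent_C]
      show levalHom u (AddMonoidAlgebra.single 0 a) = _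
      rw [levalHom_apply, AddMonoidAlgebra.coeff_single, Finsupp.sum_single_index (by simp)]
      simp
    · rw [RingHom.comp_apply, Polynomial.toLaurent_X]
      show levalHom u (AddMonoidAlgebra.single 1 1) = _
      rw [levalHom_apply, AddMonoidAlgebra.coeff_single, Finsupp.sum_single_index (by simp)]
      simp
  calc levalHom u (Polynomial.toLaurent q) = ((levalHom u).comp Polynomial.toLaurent) q := rfl
  _ = q.eval (u : ℂ) := by rw [this]; simp

lemma leval_zero_forall {p : LaurentPolynomial ℂ} (h : ∀ z : ℂ, z ≠ 0 → leval z p = 0) :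
    p = 0 := by
  obtain ⟨n, q, hq⟩ := p.exists_T_pow
  have hq0 : q = 0 := by
    apply Polynomial.eq_zero_of_infinite_isRoot
    have hsub : {z : ℂ | z ≠ 0} ⊆ {x | q.IsRoot x} := by
      intro z hz
      have hz' : z ≠ 0 := hz
      have h1 : levalHom (Units.mk0 z hz') p = 0 := by
        rw [← leval_eq]; exact h z hz'
      have h2 : q.eval z = 0 := by
        have := levalHom_toLaurent (Units.mk0 z hz') q
        rw [hq, _root_.map_mul, h1, zero_mul] at this
        exact this.symm
      exact h2
    exact Set.Infinite.mono hsub ((Set.finite_singleton (0:ℂ)).infinite_compl.mono (by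
      intro z hz
      simpa using hz))
  have : p * T n = 0 := by rw [← hq, hq0]; simp
  have := congrArg (fun x => x * T (-n)) this
  simpa [mul_T_assoc] using this

end EvalHom

section StarHom

private def mrc (p : LaurentPolynomial ℂ) : LaurentPolynomial ℂ :=
  AddMonoidAlgebra.map (starRingEnd ℂ).toAddMonoidHom p

private lemma mrc_add (p q : LaurentPolynomial ℂ) : mrc (p + q) = mrc p + mrc q :=
  AddMonoidAlgebra.map_add _ p q

private lemma mrc_single (k : ℤ) (c : ℂ) :
    mrc (AddMonoidAlgebra.single k c) = AddMonoidAlgebra.single k (starRingEnd ℂ c) :=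
  AddMonoidAlgebra.map_single _ _ _

private lemma mrc_zero : mrc 0 = 0 := AddMonoidAlgebra.map_zero _

private lemma mrc_mul (p q : LaurentPolynomial ℂ) : mrc (p * q) = mrc p * mrc q := by
  induction p using AddMonoidAlgebra.induction_linear with
  | zero => rw [zero_mul, mrc_zero, zero_mul]
  | add p1 p2 h1 h2 => rw [add_mul, mrc_add, h1, h2, mrc_add, add_mul]
  | single a x =>
    induction q using AddMonoidAlgebra.induction_linear with
    | zero => rw [mul_zero, mrc_zero, mul_zero]
    | add q1 q2 h1 h2 => rw [mul_add, mrc_add, h1, h2, mrc_add, mul_add]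
    | single b y =>
      rw [AddMonoidAlgebra.single_mul_single, mrc_single, mrc_single, mrc_single,
        AddMonoidAlgebra.single_mul_single, _root_.map_mul]

/-- Coefficientwise conjugation as a ring hom. -/
def conjCoeff : LaurentPolynomial ℂ →+* LaurentPolynomial ℂ where
  toFun := mrc
  map_one' := by
    rw [show (1 : LaurentPolynomial ℂ) = AddMonoidAlgebra.single 0 1 from rfl, mrc_single, _root_.map_one]
  map_zero' := mrc_zero
  map_add' := mrc_add
  map_mul' := mrc_mul

/-- `lstar` as a ring hom. -/
def lstarHom : LaurentPolynomial ℂ →+* LaurentPolynomial ℂ :=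
  ((invert (R := ℂ)).toAlgHom.toRingHom).comp conjCoeff

lemma invert_single (k : ℤ) (c : ℂ) :
    invert (AddMonoidAlgebra.single k c : LaurentPolynomial ℂ) = AddMonoidAlgebra.single (-k) c := by
  rw [single_eq_C_mul_T, single_eq_C_mul_T, _root_.map_mul]
  simp

lemma lstarHom_single (k : ℤ) (c : ℂ) :
    lstarHom (AddMonoidAlgebra.single k c : LaurentPolynomial ℂ)
      = AddMonoidAlgebra.single (-k) (starRingEnd ℂ c) := by
  have : lstarHom (AddMonoidAlgebra.single k c : LaurentPolynomial ℂ)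
      = invert (mrc (AddMonoidAlgebra.single k c)) := rfl
  rw [this, mrc_single, invert_single]

lemma lstar_eq (p : LaurentPolynomial ℂ) : lstar p = lstarHom p := by
  induction p using AddMonoidAlgebra.induction_linear with
  | zero => rw [_root_.map_zero]; exact Finsupp.sum_zero_index
  | add p q hp hq =>
    rw [_root_.map_add, ← hp, ← hq, lstar, lstar, lstar, AddMonoidAlgebra.coeff_add, Finsupp.sum_add_index] <;> simp [add_mul, mul_add]
  | single a x =>
    rw [lstarHom_single, lstar, AddMonoidAlgebra.coeff_single, Finsupp.sum_single_index (by simp), single_eq_C_mul_T]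

end StarHom

section DvdMachinery
open Polynomial

lemma tl_pow_dvd {π : Polynomial ℂ} (hπ : Prime π) (hX : ¬ π ∣ X) (a : ℕ) (B : Polynomial ℂ)
    (h : (toLaurent π) ^ a ∣ toLaurent B) : π ^ a ∣ B := by
  obtain ⟨c, hc⟩ := h
  obtain ⟨r, Cp, hCp⟩ := c.exists_T_pow
  have key : toLaurent (π ^ a * Cp) = toLaurent (B * X ^ r) := by
    rw [_root_.map_mul, _root_.map_mul, hCp, toLaurent_X_pow, _root_.map_pow, hc, mul_assoc]
  have h2 : π ^ a ∣ B * X ^ r := ⟨Cp, (toLaurent_injective key).symm⟩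
  exact hπ.pow_dvd_of_dvd_mul_right a (fun hd => hX (hπ.dvd_of_dvd_pow hd)) h2

lemma tl_prime {π : Polynomial ℂ} (hπ : Prime π) (hX : ¬ π ∣ X) : Prime (toLaurent π) := by
  refine ⟨by simpa using hπ.ne_zero, ?_, ?_⟩
  · intro hu
    obtain ⟨v, hv⟩ := hu.exists_right_inv
    obtain ⟨r, Cp, hCp⟩ := v.exists_T_pow
    have key : toLaurent (π * Cp) = toLaurent (X ^ r) := by
      rw [_root_.map_mul, hCp, toLaurent_X_pow, ← mul_assoc, hv, one_mul]
    have : π ∣ X ^ r := ⟨Cp, (toLaurent_injective key).symm⟩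
    rcases Nat.eq_zero_or_pos r with hr | hr
    · rw [hr, pow_zero] at this
      exact hπ.not_unit (isUnit_of_dvd_one this)
    · exact hX (hπ.dvd_of_dvd_pow this)
  · intro a b hab
    obtain ⟨ra, A, hA⟩ := a.exists_T_pow
    obtain ⟨rb, B, hB⟩ := b.exists_T_pow
    have h1 : toLaurent π ∣ toLaurent (A * B) := by
      rw [_root_.map_mul, hA, hB]
      exact hab.trans ⟨T ra * T rb, by ring⟩
    have h2 : π ∣ A * B := by
      have := tl_pow_dvd hπ hX 1 (A * B) (by simpa using h1)
      simpa using this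
    have back : ∀ (x : LaurentPolynomial ℂ) (rx : ℕ) (Xp : Polynomial ℂ),
        toLaurent Xp = x * T rx → π ∣ Xp → toLaurent π ∣ x := by
      intro x rx Xp hXp hdvd
      have h3 : toLaurent π ∣ x * T rx := hXp ▸ (Polynomial.toLaurent : _ →+* _).map_dvd hdvd
      have h4 : x = x * T rx * T (-rx) := by
        rw [mul_T_assoc, add_neg_cancel, T_zero, mul_one]
      rw [h4]
      exact h3.mul_right _
    rcases hπ.2.2 A B h2 with h | h
    · exact Or.inl (back a ra A hA h)
    · exact Or.inr (back b rb B hB h)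

lemma polyAssemble (D W : Polynomial ℂ) (hD : D ≠ 0)
    (H : ∀ π : Polynomial ℂ, Prime π → ∀ a : ℕ, π ^ a ∣ D → π ^ a ∣ W) : D ∣ W := by
  classical
  by_cases hW : W = 0
  · simp [hW]
  rw [UniqueFactorizationMonoid.dvd_iff_normalizedFactors_le_normalizedFactors hD hW,
    Multiset.le_iff_count]
  intro π
  by_cases hmem : π ∈ UniqueFactorizationMonoid.normalizedFactors D
  · have hirr := UniqueFactorizationMonoid.irreducible_of_normalized_factor _ hmem
    have hprime := UniqueFactorizationMonoid.prime_of_normalized_factor _ hmem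
    have hnorm := UniqueFactorizationMonoid.normalize_normalized_factor _ hmem
    set n := Multiset.count π (UniqueFactorizationMonoid.normalizedFactors D) with hn
    have h1 : (n : ℕ∞) ≤ emultiplicity π D := by
      rw [UniqueFactorizationMonoid.le_emultiplicity_iff_replicate_le_normalizedFactors hirr hD,
        hnorm, ← Multiset.le_count_iff_replicate_le]
    have h2 : π ^ n ∣ D := pow_dvd_of_le_emultiplicity h1
    have h3 : π ^ n ∣ W := H π hprime n h2
    have h4 : (n : ℕ∞) ≤ emultiplicity π W := le_emultiplicity_of_pow_dvd h3
    rw [UniqueFactorizationMonoid.le_emultiplicity_iff_replicate_le_normalizedFactors hirr hW,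
      hnorm, ← Multiset.le_count_iff_replicate_le] at h4
    exact h4
  · rw [Multiset.count_eq_zero_of_notMem hmem]
    exact Nat.zero_le _

lemma laurentAssemble (d w : LaurentPolynomial ℂ) (hd : d ≠ 0)
    (H : ∀ p : LaurentPolynomial ℂ, Prime p → ∀ a : ℕ, p ^ a ∣ d → p ^ a ∣ w) : d ∣ w := by
  obtain ⟨n, D, hD⟩ := d.exists_T_pow
  obtain ⟨m, Wp, hWp⟩ := w.exists_T_pow
  have hDne : D ≠ 0 := by
    intro h0
    rw [h0, _root_.map_zero] at hD
    exact hd (by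
      have := congrArg (fun x => x * T (-(n:ℤ))) hD.symm
      simpa [mul_T_assoc] using this)
  obtain ⟨s, D₀, hXD₀, hsplit⟩ := WfDvdMonoid.max_power_factor hDne irreducible_X
  have hD₀ne : D₀ ≠ 0 := by
    intro h0; rw [h0, mul_zero] at hsplit; exact hDne hsplit
  have hdvd : D₀ ∣ Wp := by
    apply polyAssemble D₀ Wp hD₀ne
    intro π hπ a hπa
    by_cases hx : π ∣ X
    · rcases Nat.eq_zero_or_pos a with ha | ha
      · simp [ha]
      · exfalso
        apply hXD₀
        obtain ⟨c, hc⟩ := hx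
        rcases irreducible_X.isUnit_or_isUnit hc with h | h
        · exact absurd h hπ.not_unit
        · obtain ⟨u, hu⟩ := h
          have hXpi : X ∣ π := ⟨(↑u⁻¹ : Polynomial ℂ), by
            rw [hc, ← hu, mul_assoc]
            simp⟩
          exact hXpi.trans ((dvd_pow_self π ha.ne').trans hπa)
    · have hπL := tl_prime hπ hx
      have h1 : (toLaurent π) ^ a ∣ d := by
        have : π ^ a ∣ D := hπa.trans ⟨X ^ s, by rw [hsplit]; ring⟩
        have h2 : (toLaurent π) ^ a ∣ toLaurent D := by
          rw [← _root_.map_pow]; exact (Polynomial.toLaurent : _ →+* _).map_dvd this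
        rw [hD] at h2
        have h5 := h2.mul_right (T (-(n:ℤ)))
        rwa [mul_T_assoc, add_neg_cancel, T_zero, mul_one] at h5
      have h5 : (toLaurent π) ^ a ∣ w := H _ hπL a h1
      apply tl_pow_dvd hπ hx a Wp
      rw [hWp]
      exact h5.mul_right _
  -- conclude d ∣ w
  have h1 : toLaurent D₀ ∣ w := by
    obtain ⟨c, hc⟩ := hdvd
    have : w = toLaurent D₀ * (toLaurent c * T (-(m:ℤ))) := by
      have h4 : w = toLaurent Wp * T (-(m:ℤ)) := by
        rw [hWp, mul_T_assoc, add_neg_cancel, T_zero, mul_one]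
      rw [h4, hc, _root_.map_mul, mul_assoc]
    exact ⟨_, this⟩
  have h2 : d = toLaurent D₀ * T ((s:ℤ) - n) := by
    have h4 : d = toLaurent D * T (-(n:ℤ)) := by
      rw [hD, mul_T_assoc, add_neg_cancel, T_zero, mul_one]
    rw [h4, hsplit, _root_.map_mul, toLaurent_X_pow]
    rw [mul_comm (T (s:ℤ)) (toLaurent D₀), mul_T_assoc, sub_eq_add_neg]
  obtain ⟨c, hc⟩ := h1
  refine ⟨T ((n:ℤ) - s) * c, ?_⟩
  have hTT : T ((s:ℤ)-n) * (T ((n:ℤ)-s) * c) = c := by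
    rw [← mul_assoc, ← T_add]
    norm_num
  rw [h2, mul_assoc, hTT, hc]

end DvdMachinery

section KeyLemma

lemma key {R₀ : Type*} [CommRing R₀] [IsDomain R₀] (p : R₀) (hp : Prime p) (a : ℕ)
    (v b c e v' b' c' e' xv xb xc xe yv yb yc ye : R₀)
    (h11 : v*xv + b*xb = v'*yv + b'*yb)
    (h21 : c*xv + e*xb = c'*yv + e'*yb)
    (h12 : v*xc + b*xe = v'*yc + b'*ye)
    (h22 : c*xc + e*xe = c'*yc + e'*ye)
    (hd : p^a ∣ v*e - b*c) (hd' : p^a ∣ v'*e' - b'*c')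
    (hv : ¬ p ∣ v)
    (hv' : ¬ p ∣ v' ∨ ¬ p ∣ c')
    (hS : ¬ p ∣ (v*xv + b*xb) ∨ ¬ p ∣ (v*xc + b*xe) ∨ ¬ p ∣ (c*xv + e*xb) ∨ ¬ p ∣ (c*xc + e*xe)) :
    (p^a ∣ e*v' - b*c') ∧ (p^a ∣ e*b' - b*e') ∧ (p^a ∣ v*c' - c*v') ∧ (p^a ∣ v*e' - c*b') := by
  have hr : p^a ∣ v*c' - c*v' := by
    have i11 : (v*c' - c*v') * (v'*yv + b'*yb)
        = (v*e-b*c)*(v'*xb) - (v'*e'-b'*c')*(v*yb) := by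
      linear_combination (v'*c)*h11 - (v*v')*h21
    have i21 : (v*c' - c*v') * (c'*yv + e'*yb)
        = (v*e-b*c)*(c'*xb) - (v'*e'-b'*c')*(c*yb) := by
      linear_combination (c*c')*h11 - (v*c')*h21
    have i12 : (v*c' - c*v') * (v'*yc + b'*ye)
        = (v*e-b*c)*(v'*xe) - (v'*e'-b'*c')*(v*ye) := by
      linear_combination (v'*c)*h12 - (v*v')*h22
    have i22 : (v*c' - c*v') * (c'*yc + e'*ye)
        = (v*e-b*c)*(c'*xe) - (v'*e'-b'*c')*(c*ye) := by
      linear_combination (c*c')*h12 - (v*c')*h22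
    rcases hS with h | h | h | h
    · have hsd : p^a ∣ (v*e-b*c)*(v'*xb) - (v'*e'-b'*c')*(v*yb) := dvd_sub (hd.mul_right _) (hd'.mul_right _)
      rw [← i11] at hsd
      exact hp.pow_dvd_of_dvd_mul_right a (by rw [← h11]; exact h) hsd
    · have hsd : p^a ∣ (v*e-b*c)*(v'*xe) - (v'*e'-b'*c')*(v*ye) := dvd_sub (hd.mul_right _) (hd'.mul_right _)
      rw [← i12] at hsd
      exact hp.pow_dvd_of_dvd_mul_right a (by rw [← h12]; exact h) hsd
    · have hsd : p^a ∣ (v*e-b*c)*(c'*xb) - (v'*e'-b'*c')*(c*yb) := dvd_sub (hd.mul_right _) (hd'.mul_right _)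
      rw [← i21] at hsd
      exact hp.pow_dvd_of_dvd_mul_right a (by rw [← h21]; exact h) hsd
    · have hsd : p^a ∣ (v*e-b*c)*(c'*xe) - (v'*e'-b'*c')*(c*ye) := dvd_sub (hd.mul_right _) (hd'.mul_right _)
      rw [← i22] at hsd
      exact hp.pow_dvd_of_dvd_mul_right a (by rw [← h22]; exact h) hsd
  have hr22 : p^a ∣ v*e' - c*b' := by
    rcases hv' with h | h
    · refine hp.pow_dvd_of_dvd_mul_left a h ?_
      have i : v' * (v*e'-c*b') = b' * (v*c'-c*v') + v * (v'*e'-b'*c') := by ring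
      rw [i]; exact dvd_add (hr.mul_left _) (hd'.mul_left _)
    · refine hp.pow_dvd_of_dvd_mul_left a h ?_
      have i : c' * (v*e'-c*b') = e' * (v*c'-c*v') + c * (v'*e'-b'*c') := by ring
      rw [i]; exact dvd_add (hr.mul_left _) (hd'.mul_left _)
  have hO11 : p^a ∣ e*v' - b*c' := by
    refine hp.pow_dvd_of_dvd_mul_left a hv ?_
    have i : v * (e*v'-b*c') = (v*e-b*c)*v' - b*(v*c'-c*v') := by ring
    rw [i]; exact dvd_sub (hd.mul_right _) (hr.mul_left _)
  have hO12 : p^a ∣ e*b' - b*e' := by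
    refine hp.pow_dvd_of_dvd_mul_left a hv ?_
    have i : v * (e*b'-b*e') = (v*e-b*c)*b' - b*(v*e'-c*b') := by ring
    rw [i]; exact dvd_sub (hd.mul_right _) (hr22.mul_left _)
  exact ⟨hO11, hO12, hr, hr22⟩
lemma divW {R₀ : Type*} [CommRing R₀] [IsDomain R₀] (p : R₀) (hp : Prime p) (a : ℕ)
    (A B C E A' B' C' E' sA sB sC sE sA' sB' sC' sE' : R₀)
    (e00 : A*sA + B*sB = A'*sA' + B'*sB')
    (e01 : A*sC + B*sE = A'*sC' + B'*sE')
    (e10 : C*sA + E*sB = C'*sA' + E'*sB')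
    (e11 : C*sC + E*sE = C'*sC' + E'*sE')
    (hd : p^a ∣ A*E - B*C) (hd' : p^a ∣ A'*E' - B'*C')
    (hpV : ¬p∣A ∨ ¬p∣B ∨ ¬p∣C ∨ ¬p∣E)
    (hpV' : ¬p∣A' ∨ ¬p∣B' ∨ ¬p∣C' ∨ ¬p∣E')
    (hS : ¬p∣(A*sA + B*sB) ∨ ¬p∣(A*sC + B*sE) ∨ ¬p∣(C*sA + E*sB) ∨ ¬p∣(C*sC + E*sE)) :
    (p^a ∣ E*A' - B*C') ∧ (p^a ∣ E*B' - B*E') ∧ (p^a ∣ A*C' - C*A') ∧ (p^a ∣ A*E' - C*B') := by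
  have hcol : (¬p∣A' ∨ ¬p∣C') ∨ (¬p∣B' ∨ ¬p∣E') := by tauto
  rcases hpV with hv | hv | hv | hv <;> rcases hcol with hc | hc
  · -- case V-pivot (0,0), V'-col 0
    obtain ⟨k1, k2, k3, k4⟩ := key p hp a A B C E A' B' C' E' sA sB sC sE sA' sB' sC' sE'
      (by linear_combination e00)
      (by linear_combination e10)
      (by linear_combination e01)
      (by linear_combination e11)
      hd
      hd'
      hv
      hc
      (by
        rcases hS with h | h | h | h
        · exact Or.inl h
        · exact Or.inr (Or.inl h)
        · exact Or.inr (Or.inr (Or.inl h))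
        · exact Or.inr (Or.inr (Or.inr h))
        )
    exact ⟨k1,
      k2,
      k3,
      k4⟩
  · -- case V-pivot (0,0), V'-col 1
    obtain ⟨k1, k2, k3, k4⟩ := key p hp a A B C E B' A' E' C' sA sB sC sE sB' sA' sE' sC'
      (by linear_combination e00)
      (by linear_combination e10)
      (by linear_combination e01)
      (by linear_combination e11)
      hd
      (by rw [show B'*C' - A'*E' = -(A'*E' - B'*C') from by ring]; exact dvd_neg.mpr hd')
      hv
      hc
      (by
        rcases hS with h | h | h | h
        · exact Or.inl h
        · exact Or.inr (Or.inl h)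
        · exact Or.inr (Or.inr (Or.inl h))
        · exact Or.inr (Or.inr (Or.inr h))
        )
    exact ⟨k2,
      k1,
      k4,
      k3⟩
  · -- case V-pivot (0,1), V'-col 0
    obtain ⟨k1, k2, k3, k4⟩ := key p hp a B A E C A' B' C' E' sB sA sE sC sA' sB' sC' sE'
      (by linear_combination e00)
      (by linear_combination e10)
      (by linear_combination e01)
      (by linear_combination e11)
      (by rw [show B*C - A*E = -(A*E - B*C) from by ring]; exact dvd_neg.mpr hd)
      hd'
      hv
      hc
      (by
        rcases hS with h | h | h | h
        · exact Or.inl (by rw [show B*sB + A*sA = A*sA + B*sB from by ring]; exact h)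
        · exact Or.inr (Or.inl (by rw [show B*sE + A*sC = A*sC + B*sE from by ring]; exact h))
        · exact Or.inr (Or.inr (Or.inl (by rw [show E*sB + C*sA = C*sA + E*sB from by ring]; exact h)))
        · exact Or.inr (Or.inr (Or.inr (by rw [show E*sE + C*sC = C*sC + E*sE from by ring]; exact h)))
        )
    exact ⟨(by rw [show E*A' - B*C' = -(B*C' - E*A') from by ring]; exact dvd_neg.mpr k3),
      (by rw [show E*B' - B*E' = -(B*E' - E*B') from by ring]; exact dvd_neg.mpr k4),
      (by rw [show A*C' - C*A' = -(C*A' - A*C') from by ring]; exact dvd_neg.mpr k1),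
      (by rw [show A*E' - C*B' = -(C*B' - A*E') from by ring]; exact dvd_neg.mpr k2)⟩
  · -- case V-pivot (0,1), V'-col 1
    obtain ⟨k1, k2, k3, k4⟩ := key p hp a B A E C B' A' E' C' sB sA sE sC sB' sA' sE' sC'
      (by linear_combination e00)
      (by linear_combination e10)
      (by linear_combination e01)
      (by linear_combination e11)
      (by rw [show B*C - A*E = -(A*E - B*C) from by ring]; exact dvd_neg.mpr hd)
      (by rw [show B'*C' - A'*E' = -(A'*E' - B'*C') from by ring]; exact dvd_neg.mpr hd')
      hv
      hc
      (by
        rcases hS with h | h | h | h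
        · exact Or.inl (by rw [show B*sB + A*sA = A*sA + B*sB from by ring]; exact h)
        · exact Or.inr (Or.inl (by rw [show B*sE + A*sC = A*sC + B*sE from by ring]; exact h))
        · exact Or.inr (Or.inr (Or.inl (by rw [show E*sB + C*sA = C*sA + E*sB from by ring]; exact h)))
        · exact Or.inr (Or.inr (Or.inr (by rw [show E*sE + C*sC = C*sC + E*sE from by ring]; exact h)))
        )
    exact ⟨(by rw [show E*A' - B*C' = -(B*C' - E*A') from by ring]; exact dvd_neg.mpr k4),
      (by rw [show E*B' - B*E' = -(B*E' - E*B') from by ring]; exact dvd_neg.mpr k3),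
      (by rw [show A*C' - C*A' = -(C*A' - A*C') from by ring]; exact dvd_neg.mpr k2),
      (by rw [show A*E' - C*B' = -(C*B' - A*E') from by ring]; exact dvd_neg.mpr k1)⟩
  · -- case V-pivot (1,0), V'-col 0
    obtain ⟨k1, k2, k3, k4⟩ := key p hp a C E A B C' E' A' B' sC sE sA sB sC' sE' sA' sB'
      (by linear_combination e11)
      (by linear_combination e01)
      (by linear_combination e10)
      (by linear_combination e00)
      (by rw [show C*B - E*A = -(A*E - B*C) from by ring]; exact dvd_neg.mpr hd)
      (by rw [show C'*B' - E'*A' = -(A'*E' - B'*C') from by ring]; exact dvd_neg.mpr hd')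
      hv
      hc.symm
      (by
        rcases hS with h | h | h | h
        · exact Or.inr (Or.inr (Or.inr h))
        · exact Or.inr (Or.inr (Or.inl h))
        · exact Or.inr (Or.inl h)
        · exact Or.inl h
        )
    exact ⟨(by rw [show E*A' - B*C' = -(B*C' - E*A') from by ring]; exact dvd_neg.mpr k1),
      (by rw [show E*B' - B*E' = -(B*E' - E*B') from by ring]; exact dvd_neg.mpr k2),
      (by rw [show A*C' - C*A' = -(C*A' - A*C') from by ring]; exact dvd_neg.mpr k3),
      (by rw [show A*E' - C*B' = -(C*B' - A*E') from by ring]; exact dvd_neg.mpr k4)⟩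
  · -- case V-pivot (1,0), V'-col 1
    obtain ⟨k1, k2, k3, k4⟩ := key p hp a C E A B E' C' B' A' sC sE sA sB sE' sC' sB' sA'
      (by linear_combination e11)
      (by linear_combination e01)
      (by linear_combination e10)
      (by linear_combination e00)
      (by rw [show C*B - E*A = -(A*E - B*C) from by ring]; exact dvd_neg.mpr hd)
      (by rw [show E'*A' - C'*B' = A'*E' - B'*C' from by ring]; exact hd')
      hv
      hc.symm
      (by
        rcases hS with h | h | h | h
        · exact Or.inr (Or.inr (Or.inr h))
        · exact Or.inr (Or.inr (Or.inl h))
        · exact Or.inr (Or.inl h)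
        · exact Or.inl h
        )
    exact ⟨(by rw [show E*A' - B*C' = -(B*C' - E*A') from by ring]; exact dvd_neg.mpr k2),
      (by rw [show E*B' - B*E' = -(B*E' - E*B') from by ring]; exact dvd_neg.mpr k1),
      (by rw [show A*C' - C*A' = -(C*A' - A*C') from by ring]; exact dvd_neg.mpr k4),
      (by rw [show A*E' - C*B' = -(C*B' - A*E') from by ring]; exact dvd_neg.mpr k3)⟩
  · -- case V-pivot (1,1), V'-col 0
    obtain ⟨k1, k2, k3, k4⟩ := key p hp a E C B A C' E' A' B' sE sC sB sA sC' sE' sA' sB'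
      (by linear_combination e11)
      (by linear_combination e01)
      (by linear_combination e10)
      (by linear_combination e00)
      (by rw [show E*A - C*B = A*E - B*C from by ring]; exact hd)
      (by rw [show C'*B' - E'*A' = -(A'*E' - B'*C') from by ring]; exact dvd_neg.mpr hd')
      hv
      hc.symm
      (by
        rcases hS with h | h | h | h
        · exact Or.inr (Or.inr (Or.inr (by rw [show B*sB + A*sA = A*sA + B*sB from by ring]; exact h)))
        · exact Or.inr (Or.inr (Or.inl (by rw [show B*sE + A*sC = A*sC + B*sE from by ring]; exact h)))
        · exact Or.inr (Or.inl (by rw [show E*sB + C*sA = C*sA + E*sB from by ring]; exact h))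
        · exact Or.inl (by rw [show E*sE + C*sC = C*sC + E*sE from by ring]; exact h)
        )
    exact ⟨k3,
      k4,
      k1,
      k2⟩
  · -- case V-pivot (1,1), V'-col 1
    obtain ⟨k1, k2, k3, k4⟩ := key p hp a E C B A E' C' B' A' sE sC sB sA sE' sC' sB' sA'
      (by linear_combination e11)
      (by linear_combination e01)
      (by linear_combination e10)
      (by linear_combination e00)
      (by rw [show E*A - C*B = A*E - B*C from by ring]; exact hd)
      (by rw [show E'*A' - C'*B' = A'*E' - B'*C' from by ring]; exact hd')
      hv
      hc.symm
      (by
        rcases hS with h | h | h | h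
        · exact Or.inr (Or.inr (Or.inr (by rw [show B*sB + A*sA = A*sA + B*sB from by ring]; exact h)))
        · exact Or.inr (Or.inr (Or.inl (by rw [show B*sE + A*sC = A*sC + B*sE from by ring]; exact h)))
        · exact Or.inr (Or.inl (by rw [show E*sB + C*sA = C*sA + E*sB from by ring]; exact h))
        · exact Or.inl (by rw [show E*sE + C*sC = C*sC + E*sE from by ring]; exact h)
        )
    exact ⟨k4,
      k3,
      k2,
      k1⟩

end KeyLemma

section Helpers

lemma meval_eq_mapMatrix (u : ℂˣ) (M : Matrix (Fin 2) (Fin 2) (LaurentPolynomial ℂ)) :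
    meval (u : ℂ) M = (levalHom u).mapMatrix M := by
  refine Matrix.ext fun i j => ?_
  simp [meval, Matrix.map_apply, RingHom.mapMatrix_apply, leval_eq]

lemma meval_mul {z : ℂ} (hz : z ≠ 0) (A B : Matrix (Fin 2) (Fin 2) (LaurentPolynomial ℂ)) :
    meval z (A * B) = meval z A * meval z B := by
  rw [show z = ((Units.mk0 z hz : ℂˣ) : ℂ) from rfl, meval_eq_mapMatrix, meval_eq_mapMatrix,
    meval_eq_mapMatrix, _root_.map_mul]

lemma meval_one {z : ℂ} (hz : z ≠ 0) :
    meval z (1 : Matrix (Fin 2) (Fin 2) (LaurentPolynomial ℂ)) = 1 := by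
  rw [show z = ((Units.mk0 z hz : ℂˣ) : ℂ) from rfl, meval_eq_mapMatrix, _root_.map_one]

lemma mat_ext {M N : Matrix (Fin 2) (Fin 2) (LaurentPolynomial ℂ)}
    (hlzf : ∀ p : LaurentPolynomial ℂ, (∀ z : ℂ, z ≠ 0 → leval z p = 0) → p = 0)
    (h : ∀ z : ℂ, z ≠ 0 → meval z M = meval z N) : M = N := by
  refine Matrix.ext fun i j => ?_
  have h2 : ∀ z : ℂ, z ≠ 0 → leval z (M i j - N i j) = 0 := by
    intro z hz
    have hu := h z hz
    rw [show z = ((Units.mk0 z hz : ℂˣ) : ℂ) from rfl, meval_eq_mapMatrix, meval_eq_mapMatrix] at hu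
    have h3 := congrFun (congrFun hu i) j
    rw [show z = ((Units.mk0 z hz : ℂˣ) : ℂ) from rfl, leval_eq, map_sub]
    simp only [RingHom.mapMatrix_apply, Matrix.map_apply] at h3
    rw [h3, sub_self]
  exact sub_eq_zero.mp (hlzf _ h2)

lemma mstar_eq (M : Matrix (Fin 2) (Fin 2) (LaurentPolynomial ℂ)) :
    mstar M = (lstarHom.mapMatrix M)ᵀ := by
  refine Matrix.ext fun i j => ?_
  simp [mstar, Matrix.map_apply, RingHom.mapMatrix_apply, Matrix.transpose_apply, lstar_eq]

lemma mstar_mul (A B : Matrix (Fin 2) (Fin 2) (LaurentPolynomial ℂ)) :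
    mstar (A * B) = mstar B * mstar A := by
  rw [mstar_eq, mstar_eq, mstar_eq, _root_.map_mul, Matrix.transpose_mul]

lemma mstar_smul (d : LaurentPolynomial ℂ) (M : Matrix (Fin 2) (Fin 2) (LaurentPolynomial ℂ)) :
    mstar (d • M) = lstarHom d • mstar M := by
  refine Matrix.ext fun i j => ?_
  simp [mstar, Matrix.map_apply, Matrix.transpose_apply, Matrix.smul_apply, smul_eq_mul,
    lstar_eq, _root_.map_mul]

lemma mstar_one : mstar (1 : Matrix (Fin 2) (Fin 2) (LaurentPolynomial ℂ)) = 1 := by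
  rw [mstar_eq, _root_.map_one, Matrix.transpose_one]

lemma smul_cancel {d : LaurentPolynomial ℂ} (hd : d ≠ 0)
    {X Y : Matrix (Fin 2) (Fin 2) (LaurentPolynomial ℂ)} (h : d • X = d • Y) : X = Y := by
  refine Matrix.ext fun i j => ?_
  have h2 : d * X i j = d * Y i j := by
    have := congrFun (congrFun h i) j
    simpa [Matrix.smul_apply, smul_eq_mul] using this
  exact mul_left_cancel₀ hd h2

end Helpers


theorem stmt15 (P V V' : Matrix (Fin 2) (Fin 2) (LaurentPolynomial ℂ))
    (hdP : P.det ≠ 0)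
    (hgcd : ∀ q : LaurentPolynomial ℂ, (∀ i j, q ∣ P i j) → IsUnit q)
    (hV : ∀ z : ℂ, z ≠ 0 → meval z V * meval z (mstar V) = meval z P)
    (hV' : ∀ z : ℂ, z ≠ 0 → meval z V' * meval z (mstar V') = meval z P)
    (l : ℂ) (k : ℤ) (hl : l ≠ 0)
    (hdet : V'.det = LaurentPolynomial.C l * LaurentPolynomial.T k * V.det) :
    ∃ U : Matrix (Fin 2) (Fin 2) (LaurentPolynomial ℂ),
      (∀ z : ℂ, z ≠ 0 → meval z U * meval z (mstar U) = 1) ∧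
      U.det = LaurentPolynomial.C l * LaurentPolynomial.T k ∧
      V' = V * U := by
  classical
  have hVP : V * mstar V = P := by
    apply mat_ext (fun p h => leval_zero_forall h)
    intro z hz
    rw [meval_mul hz]
    exact hV z hz
  have hV'P : V' * mstar V' = P := by
    apply mat_ext (fun p h => leval_zero_forall h)
    intro z hz
    rw [meval_mul hz]
    exact hV' z hz
  have hVV' : V * mstar V = V' * mstar V' := hVP.trans hV'P.symm
  set d := V.det with hd_def
  have hdet_mstar : (mstar V).det = lstarHom d := by
    rw [mstar_eq, Matrix.det_transpose, ← RingHom.map_det]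
  have hdP' : P.det = d * lstarHom d := by
    rw [← hVP, Matrix.det_mul, hdet_mstar]
  have hdne : d ≠ 0 := fun h => hdP (by rw [hdP', h, zero_mul])
  have hσdne : lstarHom d ≠ 0 := fun h => hdP (by rw [hdP', h, mul_zero])
  set W := V.adjugate * V' with hW_def
  have hW00 : W 0 0 = V 1 1 * V' 0 0 - V 0 1 * V' 1 0 := by
    simp [hW_def, Matrix.mul_apply, Matrix.adjugate_fin_two, Fin.sum_univ_two, Matrix.vecMul, dotProduct, Matrix.cons_val_zero, Matrix.cons_val_one, Matrix.head_cons]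
    ring
  have hW01 : W 0 1 = V 1 1 * V' 0 1 - V 0 1 * V' 1 1 := by
    simp [hW_def, Matrix.mul_apply, Matrix.adjugate_fin_two, Fin.sum_univ_two, Matrix.vecMul, dotProduct, Matrix.cons_val_zero, Matrix.cons_val_one, Matrix.head_cons]
    ring
  have hW10 : W 1 0 = V 0 0 * V' 1 0 - V 1 0 * V' 0 0 := by
    simp [hW_def, Matrix.mul_apply, Matrix.adjugate_fin_two, Fin.sum_univ_two, Matrix.vecMul, dotProduct, Matrix.cons_val_zero, Matrix.cons_val_one, Matrix.head_cons]
    ring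
  have hW11 : W 1 1 = V 0 0 * V' 1 1 - V 1 0 * V' 0 1 := by
    simp [hW_def, Matrix.mul_apply, Matrix.adjugate_fin_two, Fin.sum_univ_two, Matrix.vecMul, dotProduct, Matrix.cons_val_zero, Matrix.cons_val_one, Matrix.head_cons]
    ring
  have hmul_entry : ∀ (M : Matrix (Fin 2) (Fin 2) (LaurentPolynomial ℂ)) i j,
      (M * mstar M) i j = M i 0 * lstarHom (M j 0) + M i 1 * lstarHom (M j 1) := by
    intro M i j
    simp [Matrix.mul_apply, Fin.sum_univ_two, mstar, Matrix.transpose_apply, Matrix.map_apply,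
      lstar_eq]
  have Eq00 := (hmul_entry V 0 0).symm.trans ((congrFun (congrFun hVV' 0) 0).trans (hmul_entry V' 0 0))
  have Eq01 := (hmul_entry V 0 1).symm.trans ((congrFun (congrFun hVV' 0) 1).trans (hmul_entry V' 0 1))
  have Eq10 := (hmul_entry V 1 0).symm.trans ((congrFun (congrFun hVV' 1) 0).trans (hmul_entry V' 1 0))
  have Eq11 := (hmul_entry V 1 1).symm.trans ((congrFun (congrFun hVV' 1) 1).trans (hmul_entry V' 1 1))
  have hPdvd : ∀ p : LaurentPolynomial ℂ, Prime p → ¬ (∀ i j, p ∣ P i j) :=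
    fun p hp h => hp.not_unit (hgcd p h)
  have hWd : ∀ i j, d ∣ W i j := by
    intro i j
    apply laurentAssemble _ _ hdne
    intro p hp a hpa
    have hdd : p ^ a ∣ V 0 0 * V 1 1 - V 0 1 * V 1 0 := by
      rw [← Matrix.det_fin_two]; exact hpa
    have hdd' : p ^ a ∣ V' 0 0 * V' 1 1 - V' 0 1 * V' 1 0 := by
      rw [← Matrix.det_fin_two, hdet]
      exact hpa.mul_left _
    have hpV : ¬p∣V 0 0 ∨ ¬p∣V 0 1 ∨ ¬p∣V 1 0 ∨ ¬p∣V 1 1 := by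
      by_contra hcon
      push_neg at hcon
      obtain ⟨c1, c2, c3, c4⟩ := hcon
      have hall : ∀ i j, p ∣ V i j := by
        intro i j; fin_cases i <;> fin_cases j <;> assumption
      refine hPdvd p hp (fun i j => ?_)
      rw [← hVP, hmul_entry]
      exact dvd_add ((hall i 0).mul_right _) ((hall i 1).mul_right _)
    have hpV' : ¬p∣V' 0 0 ∨ ¬p∣V' 0 1 ∨ ¬p∣V' 1 0 ∨ ¬p∣V' 1 1 := by
      by_contra hcon
      push_neg at hcon
      obtain ⟨c1, c2, c3, c4⟩ := hcon
      have hall : ∀ i j, p ∣ V' i j := by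
        intro i j; fin_cases i <;> fin_cases j <;> assumption
      refine hPdvd p hp (fun i j => ?_)
      rw [← hV'P, hmul_entry]
      exact dvd_add ((hall i 0).mul_right _) ((hall i 1).mul_right _)
    have hS : ¬p∣(V 0 0 * lstarHom (V 0 0) + V 0 1 * lstarHom (V 0 1))
        ∨ ¬p∣(V 0 0 * lstarHom (V 1 0) + V 0 1 * lstarHom (V 1 1))
        ∨ ¬p∣(V 1 0 * lstarHom (V 0 0) + V 1 1 * lstarHom (V 0 1))
        ∨ ¬p∣(V 1 0 * lstarHom (V 1 0) + V 1 1 * lstarHom (V 1 1)) := by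
      by_contra hcon
      push_neg at hcon
      obtain ⟨s1, s2, s3, s4⟩ := hcon
      refine hPdvd p hp (fun i j => ?_)
      rw [← hVP, hmul_entry]
      fin_cases i <;> fin_cases j <;> assumption
    obtain ⟨w1, w2, w3, w4⟩ := divW p hp a (V 0 0) (V 0 1) (V 1 0) (V 1 1)
      (V' 0 0) (V' 0 1) (V' 1 0) (V' 1 1)
      (lstarHom (V 0 0)) (lstarHom (V 0 1)) (lstarHom (V 1 0)) (lstarHom (V 1 1))
      (lstarHom (V' 0 0)) (lstarHom (V' 0 1)) (lstarHom (V' 1 0)) (lstarHom (V' 1 1))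
      Eq00 Eq01 Eq10 Eq11 hdd hdd' hpV hpV' hS
    fin_cases i <;> fin_cases j
    · show p ^ a ∣ W 0 0
      rw [hW00]; exact w1
    · show p ^ a ∣ W 0 1
      rw [hW01]; exact w2
    · show p ^ a ∣ W 1 0
      rw [hW10]; exact w3
    · show p ^ a ∣ W 1 1
      rw [hW11]; exact w4
  let U : Matrix (Fin 2) (Fin 2) (LaurentPolynomial ℂ) :=
    Matrix.of fun i j => Classical.choose (hWd i j)
  have hU : ∀ i j, W i j = d * U i j := fun i j => Classical.choose_spec (hWd i j)
  have hWU : W = d • U := by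
    refine Matrix.ext fun i j => ?_
    rw [Matrix.smul_apply, smul_eq_mul]
    exact hU i j
  have hUU : U * mstar U = 1 := by
    apply smul_cancel (mul_ne_zero hdne hσdne)
    have h1 : (d * lstarHom d) • (U * mstar U) = W * mstar W := by
      rw [hWU, mstar_smul, Matrix.smul_mul, Matrix.mul_smul, smul_smul]
    have h2 : W * mstar W = (d * lstarHom d) • 1 := by
      calc W * mstar W = V.adjugate * V' * (mstar V' * mstar V.adjugate) := by
            rw [hW_def, mstar_mul]
        _ = V.adjugate * (V' * mstar V') * mstar V.adjugate := by
            simp only [Matrix.mul_assoc]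
        _ = V.adjugate * (V * mstar V) * mstar V.adjugate := by rw [← hVV']
        _ = (V.adjugate * V) * (mstar V * mstar V.adjugate) := by
            simp only [Matrix.mul_assoc]
        _ = (V.adjugate * V) * mstar (V.adjugate * V) := by rw [← mstar_mul]
        _ = (d • 1) * mstar (d • (1 : Matrix (Fin 2) (Fin 2) (LaurentPolynomial ℂ))) := by
            rw [Matrix.adjugate_mul, ← hd_def]
        _ = (d * lstarHom d) • 1 := by
            rw [mstar_smul, mstar_one, Matrix.smul_mul, Matrix.mul_smul, smul_smul, Matrix.one_mul]
    rw [h1, h2]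
  refine ⟨U, ?_, ?_, ?_⟩
  · intro z hz
    have h3 : meval z (U * mstar U) = meval z 1 := by rw [hUU]
    rw [meval_mul hz, meval_one hz] at h3
    exact h3
  · have h1 : (d • U).det = d ^ 2 * U.det := by
      rw [Matrix.det_smul]
      norm_num
    have h2 : W.det = d ^ 2 * (LaurentPolynomial.C l * LaurentPolynomial.T k) := by
      rw [hW_def, Matrix.det_mul, Matrix.det_adjugate, hdet]
      norm_num
      ring
    have h3 : d ^ 2 * U.det = d ^ 2 * (LaurentPolynomial.C l * LaurentPolynomial.T k) := by
      rw [← h1, ← hWU, h2]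
    exact mul_left_cancel₀ (pow_ne_zero 2 hdne) h3
  · have h1 : V * W = d • V' := by
      rw [hW_def, ← Matrix.mul_assoc, Matrix.mul_adjugate, Matrix.smul_mul, Matrix.one_mul]
    have h2 : V * W = d • (V * U) := by rw [hWU, Matrix.mul_smul]
    exact (smul_cancel hdne (h2.symm.trans h1)).symm
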